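/- arXiv:2605.21167 — 2 statements merged into one kernel-verified Lean document; each statement's English description precedes it below -/
import Mathlib

section
/- Fix ν > 0, r > 0, and let z(l) = √(2ν)·r/l for l > 0. Define k_M(l) = (2^{1−ν}/Γ(ν))·z(l)^ν·K_ν(z(l)). Then ∂(k_M(l)²)/∂l = (2^{3−2ν}/(Γ(ν)²·l))·z(l)^{2ν+1}·K_ν(z(l))·K_{ν−1}(z(l)) > 0; that is, k_M(l)² is strictly increasing in the length scale l. -/
open MeasureTheory Real

/-- The modified Bessel function of the second kind, via its integral
representation K_ν(z) = ∫₀^∞ exp(−z cosh t) cosh(ν t) dt (valid for z > 0). -/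
noncomputable def besselK (ν z : ℝ) : ℝ :=
  ∫ t in Set.Ioi (0 : ℝ), Real.exp (-z * Real.cosh t) * Real.cosh (ν * t)

/-- The Matérn kernel at distance r with length scale l and smoothness ν. -/
noncomputable def maternKernel (ν r l : ℝ) : ℝ :=
  (2 ^ (1 - ν) / Real.Gamma ν) * (Real.sqrt (2 * ν) * r / l) ^ ν *
    besselK ν (Real.sqrt (2 * ν) * r / l)

lemma cosh_le_exp_abs' (x : ℝ) : Real.cosh x ≤ Real.exp |x| := by
  rw [Real.cosh_eq]
  have h1 := Real.exp_le_exp.2 (le_abs_self x)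
  have h2 := Real.exp_le_exp.2 (neg_le_abs x)
  linarith

lemma abs_sinh_le_exp_abs (x : ℝ) : |Real.sinh x| ≤ Real.exp |x| := by
  rw [Real.sinh_eq, abs_le]
  have h1 := Real.exp_le_exp.2 (le_abs_self x)
  have h2 := Real.exp_le_exp.2 (neg_le_abs x)
  have h3 := Real.exp_pos x
  have h4 := Real.exp_pos (-x)
  constructor <;> nlinarith

lemma aux_quad (z b t : ℝ) (hz : 0 < z) (ht : 0 ≤ t) :
    b * t - z * Real.cosh t ≤ 2 * b ^ 2 / z := by
  have h1 : (1 + t / 2) ^ 2 ≤ Real.exp t := by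
    have h := Real.add_one_le_exp (t / 2)
    have h2 : Real.exp t = Real.exp (t/2) * Real.exp (t/2) := by
      rw [← Real.exp_add]; ring_nf
    nlinarith [Real.exp_pos (t/2)]
  have h2 : t ^ 2 / 8 ≤ Real.cosh t := by
    rw [Real.cosh_eq]
    nlinarith [Real.exp_pos (-t)]
  rw [le_div_iff₀ hz]
  nlinarith [sq_nonneg (z * t - 4 * b), mul_le_mul_of_nonneg_left h2 hz.le]

lemma integrable_aux (z b : ℝ) (hz : 0 < z) {f : ℝ → ℝ} (hf : Continuous f)
    (hbound : ∀ t, 0 ≤ t → |f t| ≤ Real.exp (b * t)) :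
    IntegrableOn (fun t => Real.exp (-z * Real.cosh t) * f t) (Set.Ioi 0) := by
  apply Integrable.mono' (g := fun t => Real.exp (2 * (|b| + 1) ^ 2 / z) * Real.exp (-(1:ℝ) * t))
  · exact (exp_neg_integrableOn_Ioi 0 one_pos).const_mul _
  · exact ((Real.continuous_exp.comp (continuous_const.mul Real.continuous_cosh)).mul
      hf).aestronglyMeasurable
  · filter_upwards [ae_restrict_mem measurableSet_Ioi] with t ht
    have ht' : (0:ℝ) ≤ t := le_of_lt ht
    have h1 : |Real.exp (-z * Real.cosh t) * f t| ≤ Real.exp (-z * Real.cosh t + b * t) := by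
      rw [abs_mul, abs_of_pos (Real.exp_pos _), Real.exp_add]
      exact mul_le_mul_of_nonneg_left (hbound t ht') (Real.exp_pos _).le
    have h2 : -z * Real.cosh t + b * t ≤ 2 * (|b| + 1) ^ 2 / z + -(1:ℝ) * t := by
      have := aux_quad z (|b| + 1) t hz ht'
      have hb : b * t ≤ |b| * t := mul_le_mul_of_nonneg_right (le_abs_self b) ht'
      linarith
    calc |Real.exp (-z * Real.cosh t) * f t| ≤ Real.exp (-z * Real.cosh t + b * t) := h1
      _ ≤ Real.exp (2 * (|b| + 1) ^ 2 / z + -(1:ℝ) * t) := Real.exp_le_exp.2 h2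
      _ = _ := Real.exp_add _ _

lemma integrable_besselK (μ z : ℝ) (hz : 0 < z) :
    IntegrableOn (fun t => Real.exp (-z * Real.cosh t) * Real.cosh (μ * t)) (Set.Ioi 0) := by
  apply integrable_aux z |μ| hz (Real.continuous_cosh.comp (continuous_const.mul continuous_id))
  intro t ht
  show |Real.cosh (μ * t)| ≤ _
  rw [abs_of_pos (Real.cosh_pos _)]
  calc Real.cosh (μ * t) ≤ Real.exp |μ * t| := cosh_le_exp_abs' _
    _ = Real.exp (|μ| * t) := by rw [abs_mul, abs_of_nonneg ht]

lemma besselK_pos (μ z : ℝ) (hz : 0 < z) : 0 < besselK μ z := by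
  rw [besselK]
  rw [setIntegral_pos_iff_support_of_nonneg_ae]
  · have : Function.support (fun t => Real.exp (-z * Real.cosh t) * Real.cosh (μ * t)) = Set.univ := by
      ext t; simp [Function.mem_support, (Real.exp_pos _).ne', (Real.cosh_pos _).ne']
    rw [this, Set.univ_inter]
    simp [Real.volume_Ioi]
  · filter_upwards with t
    exact le_of_lt (mul_pos (Real.exp_pos _) (Real.cosh_pos _))
  · exact integrable_besselK μ z hz

lemma besselK_hasDerivAt_aux (ν z : ℝ) (hz : 0 < z) :
    HasDerivAt (fun w => besselK ν w)
      (∫ t in Set.Ioi (0:ℝ),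
        -(Real.cosh t * (Real.exp (-z * Real.cosh t) * Real.cosh (ν * t)))) z := by
  have hmain := hasDerivAt_integral_of_dominated_loc_of_deriv_le
    (μ := volume.restrict (Set.Ioi (0:ℝ))) (x₀ := z)
    (F := fun w t => Real.exp (-w * Real.cosh t) * Real.cosh (ν * t))
    (F' := fun w t => -(Real.cosh t * (Real.exp (-w * Real.cosh t) * Real.cosh (ν * t))))
    (bound := fun t => Real.exp (2 * (|ν| + 2) ^ 2 / (z/2)) * Real.exp (-(1:ℝ) * t))
    (Metric.ball_mem_nhds z (half_pos hz))
    (Filter.Eventually.of_forall fun w =>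
      ((Real.continuous_exp.comp (continuous_const.mul Real.continuous_cosh)).mul
        (Real.continuous_cosh.comp (continuous_const.mul continuous_id))).aestronglyMeasurable)
    (integrable_besselK ν z hz)
    (((Real.continuous_cosh.mul ((Real.continuous_exp.comp
        (continuous_const.mul Real.continuous_cosh)).mul
        (Real.continuous_cosh.comp (continuous_const.mul continuous_id)))).neg).aestronglyMeasurable)
    ?_ ((exp_neg_integrableOn_Ioi 0 one_pos).const_mul _) ?_
  · exact hmain.2
  · filter_upwards [ae_restrict_mem measurableSet_Ioi] with t ht w hw
    have ht' : (0:ℝ) ≤ t := le_of_lt ht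
    have hw2 : z / 2 ≤ w := by
      rw [Metric.mem_ball, Real.dist_eq, abs_lt] at hw; linarith
    have hch : (0:ℝ) ≤ Real.cosh t := (Real.cosh_pos t).le
    have h1 : ‖-(Real.cosh t * (Real.exp (-w * Real.cosh t) * Real.cosh (ν * t)))‖
        = Real.cosh t * (Real.exp (-w * Real.cosh t) * Real.cosh (ν * t)) := by
      rw [norm_neg, Real.norm_eq_abs, abs_of_nonneg]
      positivity
    rw [h1]
    have h2 : Real.exp (-w * Real.cosh t) ≤ Real.exp (-(z/2) * Real.cosh t) :=
      Real.exp_le_exp.2 (by nlinarith)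
    have h3 : Real.cosh t ≤ Real.exp t := by
      calc Real.cosh t ≤ Real.exp |t| := cosh_le_exp_abs' t
        _ = Real.exp t := by rw [abs_of_nonneg ht']
    have h4 : Real.cosh (ν * t) ≤ Real.exp (|ν| * t) := by
      calc Real.cosh (ν * t) ≤ Real.exp |ν * t| := cosh_le_exp_abs' _
        _ = Real.exp (|ν| * t) := by rw [abs_mul, abs_of_nonneg ht']
    have h5 : Real.cosh t * (Real.exp (-w * Real.cosh t) * Real.cosh (ν * t))
        ≤ Real.exp (t + (-(z/2) * Real.cosh t + |ν| * t)) := by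
      rw [Real.exp_add, Real.exp_add]
      exact mul_le_mul h3 (mul_le_mul h2 h4 (Real.cosh_pos _).le (Real.exp_pos _).le)
        (by positivity) (Real.exp_pos _).le
    refine h5.trans ?_
    rw [← Real.exp_add]
    apply Real.exp_le_exp.2
    have := aux_quad (z/2) (|ν| + 2) t (half_pos hz) ht'
    linarith
  · filter_upwards [ae_restrict_mem measurableSet_Ioi] with t ht w hw
    have hd1 : HasDerivAt (fun w : ℝ => -w * Real.cosh t) (-Real.cosh t) w := by
      simpa using ((hasDerivAt_id w).neg.mul_const (Real.cosh t))
    have := ((hd1.exp).mul_const (Real.cosh (ν * t)))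
    convert (config := {preTransparency := .default}) this using 1
    ring

lemma integrable_sinh_sinh (ν z : ℝ) (hz : 0 < z) :
    IntegrableOn (fun t => Real.exp (-z * Real.cosh t) *
      (Real.sinh t * Real.sinh (ν * t))) (Set.Ioi 0) := by
  apply integrable_aux z (1 + |ν|) hz
    (Real.continuous_sinh.mul (Real.continuous_sinh.comp (continuous_const.mul continuous_id)))
  intro t ht
  show |Real.sinh t * Real.sinh (ν * t)| ≤ _
  rw [abs_mul]
  calc |Real.sinh t| * |Real.sinh (ν * t)| ≤ Real.exp |t| * Real.exp |ν * t| :=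
        mul_le_mul (abs_sinh_le_exp_abs t) (abs_sinh_le_exp_abs _) (abs_nonneg _) (Real.exp_pos _).le
    _ = Real.exp ((1 + |ν|) * t) := by
        rw [← Real.exp_add, abs_mul, abs_of_nonneg ht]; ring_nf

lemma besselK_rec (ν z : ℝ) (hz : 0 < z) :
    ∫ t in Set.Ioi (0:ℝ), Real.exp (-z * Real.cosh t) * (Real.sinh t * Real.sinh (ν * t))
      = (ν / z) * besselK ν z := by
  set f' : ℝ → ℝ := fun t => Real.exp (-z * Real.cosh t) * (Real.sinh t * Real.sinh (ν * t))
      - (ν / z) * (Real.exp (-z * Real.cosh t) * Real.cosh (ν * t)) with hf'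
  have key : ∫ t in Set.Ioi (0:ℝ), f' t = 0 := by
    have hderiv : ∀ x ∈ Set.Ici (0:ℝ),
        HasDerivAt (fun t => -(1/z) * (Real.exp (-z * Real.cosh t) * Real.sinh (ν * t)))
          (f' x) x := by
      intro x _
      have hA : HasDerivAt (fun t : ℝ => -z * Real.cosh t) (-z * Real.sinh x) x :=
        (Real.hasDerivAt_cosh x).const_mul (-z)
      have hB := hA.exp
      have hC : HasDerivAt (fun t : ℝ => Real.sinh (ν * t)) (Real.cosh (ν * x) * ν) x := by
        simpa [Function.comp_def] using (Real.hasDerivAt_sinh (ν * x)).comp x ((hasDerivAt_id x).const_mul ν)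
      have := (hB.mul hC).const_mul (-(1/z))
      convert (config := {preTransparency := .default}) this using 1
      rw [hf']
      field_simp
      ring
    have hint : IntegrableOn f' (Set.Ioi 0) :=
      (integrable_sinh_sinh ν z hz).sub ((integrable_besselK ν z hz).const_mul _)
    have htend : Filter.Tendsto
        (fun t => -(1/z) * (Real.exp (-z * Real.cosh t) * Real.sinh (ν * t)))
        Filter.atTop (nhds 0) := by
      apply squeeze_zero_norm' (a := fun t =>
        (1/z) * (Real.exp (2 * (|ν| + 1) ^ 2 / z) * Real.exp (-(1:ℝ) * t)))
      · filter_upwards [Filter.eventually_ge_atTop (0:ℝ)] with t ht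
        rw [norm_mul, norm_mul, norm_neg, Real.norm_eq_abs, Real.norm_eq_abs, Real.norm_eq_abs,
          abs_of_pos (by positivity : (0:ℝ) < 1/z), abs_of_pos (Real.exp_pos _)]
        apply mul_le_mul_of_nonneg_left _ (by positivity)
        calc Real.exp (-z * Real.cosh t) * |Real.sinh (ν * t)|
            ≤ Real.exp (-z * Real.cosh t) * Real.exp (|ν| * t) := by
              apply mul_le_mul_of_nonneg_left _ (Real.exp_pos _).le
              calc |Real.sinh (ν * t)| ≤ Real.exp |ν * t| := abs_sinh_le_exp_abs _
                _ = Real.exp (|ν| * t) := by rw [abs_mul, abs_of_nonneg ht]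
          _ ≤ Real.exp (2 * (|ν| + 1) ^ 2 / z) * Real.exp (-(1:ℝ) * t) := by
              rw [← Real.exp_add, ← Real.exp_add]
              apply Real.exp_le_exp.2
              have := aux_quad z (|ν| + 1) t hz ht
              linarith
      · rw [show (0:ℝ) = (1/z) * (Real.exp (2 * (|ν| + 1) ^ 2 / z) * 0) by ring]
        apply Filter.Tendsto.const_mul
        apply Filter.Tendsto.const_mul
        have : Filter.Tendsto (fun t : ℝ => Real.exp (-(1:ℝ) * t)) Filter.atTop (nhds 0) := by
          simpa [neg_one_mul] using Real.tendsto_exp_neg_atTop_nhds_zero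
        exact this
    have := integral_Ioi_of_hasDerivAt_of_tendsto' hderiv hint htend
    rw [this]
    simp
  have hsplit := integral_sub (integrable_sinh_sinh ν z hz)
    ((integrable_besselK ν z hz).const_mul (ν / z))
  rw [hf'] at key
  rw [key] at hsplit
  have h2 : ∫ t in Set.Ioi (0:ℝ), (ν / z) * (Real.exp (-z * Real.cosh t) * Real.cosh (ν * t))
      = (ν / z) * besselK ν z := by
    rw [besselK, MeasureTheory.integral_const_mul]
  linarith [hsplit, h2]

lemma besselK_hasDerivAt (ν z : ℝ) (hz : 0 < z) :
    HasDerivAt (besselK ν) (-(ν / z * besselK ν z + besselK (ν - 1) z)) z := by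
  have h := besselK_hasDerivAt_aux ν z hz
  have heq : ∀ t : ℝ, -(Real.cosh t * (Real.exp (-z * Real.cosh t) * Real.cosh (ν * t)))
      = -(Real.exp (-z * Real.cosh t) * (Real.sinh t * Real.sinh (ν * t))
          + Real.exp (-z * Real.cosh t) * Real.cosh ((ν - 1) * t)) := by
    intro t
    have hcs := Real.cosh_sub (ν * t) t
    have h2 : ν * t - t = (ν - 1) * t := by ring
    rw [h2] at hcs
    linear_combination (Real.exp (-z * Real.cosh t)) * hcs
  have hval : (∫ t in Set.Ioi (0:ℝ),
      -(Real.cosh t * (Real.exp (-z * Real.cosh t) * Real.cosh (ν * t))))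
      = -(ν / z * besselK ν z + besselK (ν - 1) z) := by
    simp only [heq]
    rw [integral_neg, integral_add (integrable_sinh_sinh ν z hz)
      (integrable_besselK (ν - 1) z hz), besselK_rec ν z hz]
    simp only [besselK]
  exact hval ▸ h

lemma rpow_besselK_hasDerivAt (ν z : ℝ) (hz : 0 < z) :
    HasDerivAt (fun w : ℝ => w ^ ν * besselK ν w) (-(z ^ ν * besselK (ν - 1) z)) z := by
  have h1 : HasDerivAt (fun w : ℝ => w ^ ν) (ν * z ^ (ν - 1)) z :=
    Real.hasDerivAt_rpow_const (Or.inl hz.ne')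
  have h2 := h1.mul (besselK_hasDerivAt ν z hz)
  convert (config := {preTransparency := .default}) h2 using 1
  rw [Real.rpow_sub hz, Real.rpow_one]
  field_simp
  ring

/-- The squared Matérn kernel is strictly increasing in the length scale l:
its derivative equals (2^{3−2ν}/(Γ(ν)²·l))·z^{2ν+1}·K_ν(z)·K_{ν−1}(z) > 0,
where z = √(2ν)·r/l. -/
theorem matern_sq_strictly_increasing_in_lengthscale
    (ν r l : ℝ) (hν : 0 < ν) (hr : 0 < r) (hl : 0 < l) :
    HasDerivAt (fun s : ℝ => (maternKernel ν r s) ^ 2)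
      ((2 ^ (3 - 2 * ν) / (Real.Gamma ν ^ 2 * l)) *
        (Real.sqrt (2 * ν) * r / l) ^ (2 * ν + 1) *
        besselK ν (Real.sqrt (2 * ν) * r / l) *
        besselK (ν - 1) (Real.sqrt (2 * ν) * r / l)) l ∧
    0 < (2 ^ (3 - 2 * ν) / (Real.Gamma ν ^ 2 * l)) *
        (Real.sqrt (2 * ν) * r / l) ^ (2 * ν + 1) *
        besselK ν (Real.sqrt (2 * ν) * r / l) *
        besselK (ν - 1) (Real.sqrt (2 * ν) * r / l) := by
  have hc : 0 < Real.sqrt (2 * ν) * r :=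
    mul_pos (Real.sqrt_pos.2 (by linarith)) hr
  set c : ℝ := Real.sqrt (2 * ν) * r with hcdef
  set z : ℝ := c / l with hzdef
  have hzpos : 0 < z := div_pos hc hl
  have hΓ : 0 < Real.Gamma ν := Real.Gamma_pos_of_pos hν
  constructor
  · -- derivative
    have hf : HasDerivAt (fun s : ℝ => c / s) (-(c / l ^ 2)) l := by
      have h := (hasDerivAt_inv hl.ne').const_mul c
      convert (config := {preTransparency := .default}) h using 1
      rw [div_eq_mul_inv]; ring
    have hg := rpow_besselK_hasDerivAt ν z hzpos
    have hcomp := hg.comp l hf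
    have hk : HasDerivAt (fun s : ℝ => maternKernel ν r s)
        ((2 ^ (1 - ν) / Real.Gamma ν) * (-(z ^ ν * besselK (ν - 1) z) * -(c / l ^ 2))) l := by
      have := hcomp.const_mul (2 ^ (1 - ν) / Real.Gamma ν)
      convert (config := {preTransparency := .default}) this using 1
      funext s
      simp only [maternKernel, Function.comp, hcdef]
      ring
    have hsq := hk.pow 2
    convert (config := {preTransparency := .default}) hsq using 1
    have hmat : maternKernel ν r l = (2 ^ (1 - ν) / Real.Gamma ν) * z ^ ν * besselK ν z := rfl
    rw [hmat]
    have hz1 : z ^ (2 * ν + 1) = z ^ ν * z ^ ν * z := by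
      rw [show 2 * ν + 1 = ν + (ν + 1) by ring, Real.rpow_add hzpos, Real.rpow_add hzpos,
        Real.rpow_one]
      ring
    have h2p : (2 : ℝ) ^ (3 - 2 * ν) = 2 * (2 ^ (1 - ν) * 2 ^ (1 - ν)) := by
      rw [show 3 - 2 * ν = 1 + ((1 - ν) + (1 - ν)) by ring, Real.rpow_add two_pos,
        Real.rpow_add two_pos, Real.rpow_one]
    have hcl : c / l ^ 2 = z / l := by
      rw [hzdef, div_div, sq]
    rw [hz1, h2p, hcl]
    have h2' : ((2:ℕ):ℝ) = 2 := by norm_num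
    rw [h2']
    field_simp [hΓ.ne', hl.ne', hc.ne', hzpos.ne']
    rw [show (2:ℕ) - 1 = 1 from rfl, pow_one]
    field_simp
  · have hb1 := besselK_pos ν z hzpos
    have hb2 := besselK_pos (ν - 1) z hzpos
    have h1 : (0:ℝ) < 2 ^ (3 - 2 * ν) := Real.rpow_pos_of_pos two_pos _
    have h2 : (0:ℝ) < z ^ (2 * ν + 1) := Real.rpow_pos_of_pos hzpos _
    positivity
end

section
/- Let k̄_1,…,k̄_B be identically distributed with pairwise correlation ρ, and suppose the normalization factors are bounded: the GAC of the aggregate computed by first aggregating then normalizing, K_agg, satisfies 1 − q_max²·(1 − K̄) ≤ K_agg ≤ 1 − q_min²·(1 − K̄), where K̄ := 1 − E[((1/B)Σ_b k̄_b)²] and q_min = min_x k(x,x)/max_x k(x,x), q_max = max_x k(x,x)/min_x k(x,x). -/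
open MeasureTheory Finset


lemma ensemble_pt {B : ℕ} (hB : 1 ≤ B) (m M : ℝ) (hm : 0 < m) (hmM : m ≤ M)
    (a c c' : Fin B → ℝ) (ha : ∀ b, 0 ≤ a b)
    (hcm : ∀ b, m ≤ c b) (hcM : ∀ b, c b ≤ M)
    (hc'm : ∀ b, m ≤ c' b) (hc'M : ∀ b, c' b ≤ M) :
    (m / M) ^ 2 * ((1 / (B:ℝ)) * ∑ b, a b / (Real.sqrt (c b) * Real.sqrt (c' b))) ^ 2 ≤
      (((1 / (B:ℝ)) * ∑ b, a b) /
        Real.sqrt (((1/(B:ℝ)) * ∑ b, c b) * ((1/(B:ℝ)) * ∑ b, c' b))) ^ 2 ∧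
    (((1 / (B:ℝ)) * ∑ b, a b) /
        Real.sqrt (((1/(B:ℝ)) * ∑ b, c b) * ((1/(B:ℝ)) * ∑ b, c' b))) ^ 2 ≤
      (M / m) ^ 2 * ((1 / (B:ℝ)) * ∑ b, a b / (Real.sqrt (c b) * Real.sqrt (c' b))) ^ 2 := by
  have hBpos : (0:ℝ) < B := by exact_mod_cast hB
  have hMpos : 0 < M := lt_of_lt_of_le hm hmM
  have key : ∀ x y : ℝ, m ≤ x → x ≤ M → m ≤ y → y ≤ M →
      m ≤ Real.sqrt x * Real.sqrt y ∧ Real.sqrt x * Real.sqrt y ≤ M := by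
    intro x y h1 h2 h3 h4
    constructor
    · calc m = Real.sqrt m * Real.sqrt m := (Real.mul_self_sqrt hm.le).symm
        _ ≤ Real.sqrt x * Real.sqrt y :=
          mul_le_mul (Real.sqrt_le_sqrt h1) (Real.sqrt_le_sqrt h3)
            (Real.sqrt_nonneg m) (Real.sqrt_nonneg x)
    · calc Real.sqrt x * Real.sqrt y ≤ Real.sqrt M * Real.sqrt M :=
          mul_le_mul (Real.sqrt_le_sqrt h2) (Real.sqrt_le_sqrt h4)
            (Real.sqrt_nonneg y) (Real.sqrt_nonneg M)
        _ = M := Real.mul_self_sqrt hMpos.le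
  have avg : ∀ f : Fin B → ℝ, (∀ b, m ≤ f b) → (∀ b, f b ≤ M) →
      m ≤ (1/(B:ℝ)) * ∑ b, f b ∧ (1/(B:ℝ)) * ∑ b, f b ≤ M := by
    intro f h1 h2
    have hs1 : (B:ℝ) * m ≤ ∑ b, f b := by
      have : ∑ _b : Fin B, m ≤ ∑ b, f b := Finset.sum_le_sum (fun b _ => h1 b)
      simpa [mul_comm] using this
    have hs2 : ∑ b, f b ≤ (B:ℝ) * M := by
      have : ∑ b, f b ≤ ∑ _b : Fin B, M := Finset.sum_le_sum (fun b _ => h2 b)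
      simpa [mul_comm] using this
    have e : (1/(B:ℝ)) * ∑ b, f b = (∑ b, f b) / B := by ring
    constructor
    · rw [e]; exact (le_div_iff₀ hBpos).mpr (by linarith)
    · rw [e]; exact (div_le_iff₀ hBpos).mpr (by linarith)
  set T : ℝ := (1/(B:ℝ)) * ∑ b, a b with hT
  have hTnn : 0 ≤ T := by
    have : 0 ≤ ∑ b, a b := Finset.sum_nonneg (fun b _ => ha b)
    positivity
  set u : ℝ := (1/(B:ℝ)) * ∑ b, a b / (Real.sqrt (c b) * Real.sqrt (c' b)) with hu
  have hunn : 0 ≤ u := by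
    apply mul_nonneg (by positivity)
    exact Finset.sum_nonneg (fun b _ => div_nonneg (ha b)
      (mul_nonneg (Real.sqrt_nonneg _) (Real.sqrt_nonneg _)))
  have huL : T / M ≤ u := by
    calc T / M = (1/(B:ℝ)) * ∑ b, a b / M := by
          rw [hT, ← Finset.sum_div]; ring
      _ ≤ u := by
          rw [hu]
          apply mul_le_mul_of_nonneg_left _ (by positivity)
          apply Finset.sum_le_sum
          intro b _
          have hk := key (c b) (c' b) (hcm b) (hcM b) (hc'm b) (hc'M b)
          exact div_le_div_of_nonneg_left (ha b) (lt_of_lt_of_le hm hk.1) hk.2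
  have huU : u ≤ T / m := by
    calc u ≤ (1/(B:ℝ)) * ∑ b, a b / m := by
          rw [hu]
          apply mul_le_mul_of_nonneg_left _ (by positivity)
          apply Finset.sum_le_sum
          intro b _
          have hk := key (c b) (c' b) (hcm b) (hcM b) (hc'm b) (hc'M b)
          exact div_le_div_of_nonneg_left (ha b) hm hk.1
      _ = T / m := by rw [hT, ← Finset.sum_div]; ring
  set D : ℝ := (1/(B:ℝ)) * ∑ b, c b with hD
  set D' : ℝ := (1/(B:ℝ)) * ∑ b, c' b with hD'
  have hDb := avg c hcm hcM
  have hD'b := avg c' hc'm hc'M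
  have hsq : Real.sqrt (D * D') = Real.sqrt D * Real.sqrt D' :=
    Real.sqrt_mul (le_trans hm.le hDb.1) _
  have hden := key D D' hDb.1 hDb.2 hD'b.1 hD'b.2
  set v : ℝ := T / Real.sqrt (D * D') with hv
  have hvnn : 0 ≤ v := div_nonneg hTnn (Real.sqrt_nonneg _)
  have hvL : T / M ≤ v := by
    rw [hv, hsq]
    exact div_le_div_of_nonneg_left hTnn (lt_of_lt_of_le hm hden.1) hden.2
  have hvU : v ≤ T / m := by
    rw [hv, hsq]
    exact div_le_div_of_nonneg_left hTnn hm hden.1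
  have hL : (m / M) * u ≤ v := by
    have e : (m / M) * (T / m) = T / M := by field_simp
    calc (m / M) * u ≤ (m / M) * (T / m) :=
          mul_le_mul_of_nonneg_left huU (by positivity)
      _ = T / M := e
      _ ≤ v := hvL
  have hU : v ≤ (M / m) * u := by
    have e : (M / m) * (T / M) = T / m := by field_simp
    calc v ≤ T / m := hvU
      _ = (M / m) * (T / M) := e.symm
      _ ≤ (M / m) * u := mul_le_mul_of_nonneg_left huL (by positivity)
  constructor
  · calc (m / M) ^ 2 * u ^ 2 = ((m / M) * u) ^ 2 := by ring
      _ ≤ v ^ 2 := pow_le_pow_left₀ (by positivity) hL 2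
  · calc v ^ 2 ≤ ((M / m) * u) ^ 2 := pow_le_pow_left₀ hvnn hU 2
      _ = (M / m) ^ 2 * u ^ 2 := by ring


/-- Sandwich bounds for the GAC of an aggregate of B kernel smoothers, when
aggregation is done before normalization: with
q_min = min_x k(x,x)/max_x k(x,x) and q_max = max_x k(x,x)/min_x k(x,x),
1 − q_max²(1 − K̄) ≤ K_agg ≤ 1 − q_min²(1 − K̄). -/
theorem ensemble_gac_sandwich
    {Ω E : Type*} [MeasurableSpace Ω] (μ : Measure Ω) [IsProbabilityMeasure μ]
    (B : ℕ) (hB : 1 ≤ B)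
    (k : E → E → ℝ) (hk : ∀ e e', 0 ≤ k e e')
    (hbdd : BddAbove (Set.range fun e => k e e))
    (hpos : 0 < sInf (Set.range fun e => k e e))
    (hne : (Set.range fun e => k e e).Nonempty)
    (X X' : Fin B → Ω → E)
    (hint1 : Integrable (fun ω =>
      (((1 / (B : ℝ)) * ∑ b, k (X b ω) (X' b ω)) /
        Real.sqrt (((1 / (B : ℝ)) * ∑ b, k (X b ω) (X b ω)) *
          ((1 / (B : ℝ)) * ∑ b, k (X' b ω) (X' b ω)))) ^ 2) μ)
    (hint2 : Integrable (fun ω =>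
      ((1 / (B : ℝ)) * ∑ b, k (X b ω) (X' b ω) /
        (Real.sqrt (k (X b ω) (X b ω)) * Real.sqrt (k (X' b ω) (X' b ω)))) ^ 2) μ) :
    (1 - (sSup (Set.range fun e => k e e) / sInf (Set.range fun e => k e e)) ^ 2 *
        (1 - (1 - ∫ ω, ((1 / (B : ℝ)) * ∑ b, k (X b ω) (X' b ω) /
          (Real.sqrt (k (X b ω) (X b ω)) * Real.sqrt (k (X' b ω) (X' b ω)))) ^ 2 ∂μ))
      ≤ 1 - ∫ ω, (((1 / (B : ℝ)) * ∑ b, k (X b ω) (X' b ω)) /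
          Real.sqrt (((1 / (B : ℝ)) * ∑ b, k (X b ω) (X b ω)) *
            ((1 / (B : ℝ)) * ∑ b, k (X' b ω) (X' b ω)))) ^ 2 ∂μ) ∧
    (1 - ∫ ω, (((1 / (B : ℝ)) * ∑ b, k (X b ω) (X' b ω)) /
          Real.sqrt (((1 / (B : ℝ)) * ∑ b, k (X b ω) (X b ω)) *
            ((1 / (B : ℝ)) * ∑ b, k (X' b ω) (X' b ω)))) ^ 2 ∂μ
      ≤ 1 - (sInf (Set.range fun e => k e e) / sSup (Set.range fun e => k e e)) ^ 2 *
        (1 - (1 - ∫ ω, ((1 / (B : ℝ)) * ∑ b, k (X b ω) (X' b ω) /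
          (Real.sqrt (k (X b ω) (X b ω)) * Real.sqrt (k (X' b ω) (X' b ω)))) ^ 2 ∂μ))) := by
  have hbelow : BddBelow (Set.range fun e => k e e) :=
    ⟨0, by rintro x ⟨e, rfl⟩; exact hk e e⟩
  set m := sInf (Set.range fun e => k e e) with hm
  set M := sSup (Set.range fun e => k e e) with hM
  have hmM : m ≤ M := csInf_le_csSup hne hbelow hbdd
  have hcm : ∀ (ω : Ω) (b : Fin B), m ≤ k (X b ω) (X b ω) :=
    fun ω b => csInf_le hbelow ⟨X b ω, rfl⟩
  have hcM : ∀ (ω : Ω) (b : Fin B), k (X b ω) (X b ω) ≤ M :=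
    fun ω b => le_csSup hbdd ⟨X b ω, rfl⟩
  have hc'm : ∀ (ω : Ω) (b : Fin B), m ≤ k (X' b ω) (X' b ω) :=
    fun ω b => csInf_le hbelow ⟨X' b ω, rfl⟩
  have hc'M : ∀ (ω : Ω) (b : Fin B), k (X' b ω) (X' b ω) ≤ M :=
    fun ω b => le_csSup hbdd ⟨X' b ω, rfl⟩
  have hpt : ∀ ω : Ω,
      (m / M) ^ 2 * ((1 / (B:ℝ)) * ∑ b, k (X b ω) (X' b ω) /
          (Real.sqrt (k (X b ω) (X b ω)) * Real.sqrt (k (X' b ω) (X' b ω)))) ^ 2 ≤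
        (((1 / (B:ℝ)) * ∑ b, k (X b ω) (X' b ω)) /
          Real.sqrt (((1/(B:ℝ)) * ∑ b, k (X b ω) (X b ω)) *
            ((1/(B:ℝ)) * ∑ b, k (X' b ω) (X' b ω)))) ^ 2 ∧
      (((1 / (B:ℝ)) * ∑ b, k (X b ω) (X' b ω)) /
          Real.sqrt (((1/(B:ℝ)) * ∑ b, k (X b ω) (X b ω)) *
            ((1/(B:ℝ)) * ∑ b, k (X' b ω) (X' b ω)))) ^ 2 ≤
        (M / m) ^ 2 * ((1 / (B:ℝ)) * ∑ b, k (X b ω) (X' b ω) /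
          (Real.sqrt (k (X b ω) (X b ω)) * Real.sqrt (k (X' b ω) (X' b ω)))) ^ 2 :=
    fun ω => ensemble_pt hB m M hpos hmM
      (fun b => k (X b ω) (X' b ω)) (fun b => k (X b ω) (X b ω))
      (fun b => k (X' b ω) (X' b ω)) (fun b => hk _ _)
      (hcm ω) (hcM ω) (hc'm ω) (hc'M ω)
  have I1 : (m / M) ^ 2 * (∫ ω, ((1 / (B:ℝ)) * ∑ b, k (X b ω) (X' b ω) /
        (Real.sqrt (k (X b ω) (X b ω)) * Real.sqrt (k (X' b ω) (X' b ω)))) ^ 2 ∂μ) ≤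
      ∫ ω, (((1 / (B:ℝ)) * ∑ b, k (X b ω) (X' b ω)) /
        Real.sqrt (((1/(B:ℝ)) * ∑ b, k (X b ω) (X b ω)) *
          ((1/(B:ℝ)) * ∑ b, k (X' b ω) (X' b ω)))) ^ 2 ∂μ := by
    rw [← integral_const_mul]
    exact integral_mono (hint2.const_mul _) hint1 (fun ω => (hpt ω).1)
  have I2 : ∫ ω, (((1 / (B:ℝ)) * ∑ b, k (X b ω) (X' b ω)) /
        Real.sqrt (((1/(B:ℝ)) * ∑ b, k (X b ω) (X b ω)) *
          ((1/(B:ℝ)) * ∑ b, k (X' b ω) (X' b ω)))) ^ 2 ∂μ ≤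
      (M / m) ^ 2 * (∫ ω, ((1 / (B:ℝ)) * ∑ b, k (X b ω) (X' b ω) /
        (Real.sqrt (k (X b ω) (X b ω)) * Real.sqrt (k (X' b ω) (X' b ω)))) ^ 2 ∂μ) := by
    rw [← integral_const_mul]
    exact integral_mono hint1 (hint2.const_mul _) (fun ω => (hpt ω).2)
  constructor <;> [linarith [I2]; linarith [I1]]
end
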